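/- arXiv:2501.13393 — 5 statements merged into one kernel-verified Lean document; each statement's English description precedes it below -/
import Mathlib

section
/- The characteristic polynomial of the Grover algorithm matrix U = R_D R_f is det(λI_N - U) = (λ + 1)^{N-2} · (λ² - 2(1 - 2/N)λ + 1). -/
/-- The Grover diffusion matrix `R_D = 2|D⟩⟨D| - I_N`. -/
noncomputable def groverRD (N : ℕ) : Matrix (Fin N) (Fin N) ℝ :=
  Matrix.of fun i j => 2 / (N : ℝ) - if i = j then 1 else 0

/-- The Grover oracle matrix `R_f = I_N - 2|0⟩⟨0|`. -/
def groverRf (N : ℕ) [NeZero N] : Matrix (Fin N) (Fin N) ℝ :=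
  Matrix.diagonal fun i => if i = 0 then -1 else 1

/-- The Grover algorithm matrix `U = R_D R_f`. -/
noncomputable def groverU (N : ℕ) [NeZero N] : Matrix (Fin N) (Fin N) ℝ :=
  groverRD N * groverRf N

lemma grover_decomp (N : ℕ) [NeZero N] (l : ℝ) :
    l • (1 : Matrix (Fin N) (Fin N) ℝ) - groverU N =
      Matrix.diagonal (fun i => if i = 0 then l - 1 else l + 1) +
        Matrix.replicateCol Unit (fun _ => (1 : ℝ)) *
          Matrix.replicateRow Unit (fun j => if j = 0 then 2 / (N : ℝ) else -(2 / (N : ℝ))) := by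
  ext i j
  simp only [Matrix.sub_apply, Matrix.smul_apply, Matrix.one_apply, groverU, groverRD, groverRf,
    Matrix.mul_apply, Matrix.diagonal_apply, Matrix.add_apply, Matrix.of_apply,
    Matrix.replicateCol_apply, Matrix.replicateRow_apply, smul_eq_mul]
  rw [Finset.sum_eq_single j]
  · by_cases hij : i = j <;> by_cases hj : j = 0 <;> subst_vars <;> simp_all <;> ring
  · intro k _ hk
    simp [hk]
  · simp

lemma grover_generic (N : ℕ) [NeZero N] (hN : 2 ≤ N) (l : ℝ) (h1 : l - 1 ≠ 0)
    (h2 : l + 1 ≠ 0) :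
    Matrix.det (l • (1 : Matrix (Fin N) (Fin N) ℝ) - groverU N) =
      (l + 1) ^ (N - 2) * (l ^ 2 - 2 * (1 - 2 / (N : ℝ)) * l + 1) := by
  have hNR : (N : ℝ) ≠ 0 := Nat.cast_ne_zero.mpr (NeZero.ne N)
  set d : Fin N → ℝ := fun i => if i = 0 then l - 1 else l + 1 with hd
  set v : Fin N → ℝ := fun j => if j = 0 then 2 / (N : ℝ) else -(2 / (N : ℝ)) with hv
  have hdet : (Matrix.diagonal d).det = (l - 1) * (l + 1) ^ (N - 1) := by
    rw [Matrix.det_diagonal, ← Finset.mul_prod_erase _ _ (Finset.mem_univ (0 : Fin N))]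
    have : ∀ i ∈ Finset.univ.erase (0 : Fin N), d i = l + 1 := by
      intro i hi
      simp [hd, (Finset.mem_erase.mp hi).1]
    rw [Finset.prod_congr rfl this, Finset.prod_const]
    simp [hd, Finset.card_erase_of_mem, Finset.card_univ]
  have hunit : IsUnit (Matrix.diagonal d).det := by
    rw [hdet]
    exact (IsUnit.mk0 _ h1).mul ((IsUnit.mk0 _ h2).pow _)
  rw [grover_decomp, Matrix.det_add_replicateCol_mul_replicateRow hunit, hdet, Matrix.det_unique]
  have hinv : (Matrix.diagonal d)⁻¹ = Matrix.diagonal (fun i => (d i)⁻¹) := by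
    apply Matrix.inv_eq_right_inv
    rw [Matrix.diagonal_mul_diagonal]
    convert Matrix.diagonal_one with i
    exact mul_inv_cancel₀ (by by_cases hi : i = 0 <;> simp [hd, hi, h1, h2])
  have hsum : (∑ k : Fin N, v k * (d k)⁻¹)
      = 2 / (N : ℝ) * (l - 1)⁻¹ - ((N : ℝ) - 1) * (2 / (N : ℝ)) * (l + 1)⁻¹ := by
    rw [← Finset.add_sum_erase _ _ (Finset.mem_univ (0 : Fin N))]
    have : ∀ k ∈ Finset.univ.erase (0 : Fin N), v k * (d k)⁻¹ = -(2 / (N : ℝ)) * (l + 1)⁻¹ := by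
      intro k hk
      simp [hv, hd, (Finset.mem_erase.mp hk).1]
    rw [Finset.sum_congr rfl this, Finset.sum_const]
    have hcard : (Finset.univ.erase (0 : Fin N)).card = N - 1 := by
      simp [Finset.card_erase_of_mem, Finset.card_univ]
    rw [hcard, nsmul_eq_mul, Nat.cast_sub (by omega : 1 ≤ N), Nat.cast_one]
    simp only [hv, hd, if_pos rfl]
    ring
  have key : ((1 + Matrix.replicateRow Unit v * (Matrix.diagonal d)⁻¹ * Matrix.replicateCol Unit (fun _ => (1 : ℝ))
        : Matrix Unit Unit ℝ) (default : Unit) (default : Unit))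
      = 1 + (2 / (N : ℝ) * (l - 1)⁻¹ - ((N : ℝ) - 1) * (2 / (N : ℝ)) * (l + 1)⁻¹) := by
    rw [hinv, ← hsum]
    simp only [Matrix.add_apply, Matrix.one_apply_eq, Matrix.mul_apply, Matrix.replicateCol_apply,
      Matrix.replicateRow_apply, Matrix.diagonal_apply, mul_ite, mul_zero, mul_one,
      Finset.sum_ite_eq, Finset.sum_ite_eq', Finset.mem_univ, if_true]
    erw [Matrix.mul_apply]
    simp [Matrix.mul_apply, Matrix.diagonal_apply]
  erw [key]
  have hexp : (l + 1) ^ (N - 1) = (l + 1) ^ (N - 2) * (l + 1) := by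
    rw [← pow_succ]
    congr 1
    omega
  rw [hexp]
  field_simp
  ring

theorem stmt_5 (N : ℕ) [NeZero N] (hN : 2 ≤ N) (l : ℝ) :
    Matrix.det (l • (1 : Matrix (Fin N) (Fin N) ℝ) - groverU N) =
      (l + 1) ^ (N - 2) * (l ^ 2 - 2 * (1 - 2 / (N : ℝ)) * l + 1) := by
  have hdense : Dense (({1, -1} : Set ℝ)ᶜ) :=
    Set.Countable.dense_compl ℝ (((Set.finite_singleton (-1)).insert 1).countable)
  have hf : Continuous fun t : ℝ =>
      Matrix.det (t • (1 : Matrix (Fin N) (Fin N) ℝ) - groverU N) := by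
    apply Continuous.matrix_det
    exact (continuous_id.smul continuous_const).sub continuous_const
  have hg : Continuous fun t : ℝ =>
      (t + 1) ^ (N - 2) * (t ^ 2 - 2 * (1 - 2 / (N : ℝ)) * t + 1) := by
    continuity
  have heq := Continuous.ext_on hdense hf hg ?_
  · exact congrFun heq l
  · intro t ht
    simp only [Set.mem_compl_iff, Set.mem_insert_iff, Set.mem_singleton_iff, not_or] at ht
    exact grover_generic N hN t (sub_ne_zero.mpr ht.1) (by
      intro h
      exact ht.2 (by linarith [h] : t = -1))
end

section
/- Every eigenvalue of the Grover algorithm matrix U_N is either -1 or one of e^{±iξ} where cos ξ = 1 - 2/N; precisely, the spectrum of U_N (with multiplicity) is {[-1]^{N-2}, [e^{iξ}]¹, [e^{-iξ}]¹}. -/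
open Polynomial

lemma eval_charpoly' {n : Type*} [DecidableEq n] [Fintype n] (M : Matrix n n ℂ) (z : ℂ) :
    M.charpoly.eval z = (Matrix.diagonal (fun _ => z) - M).det := by
  rw [Matrix.charpoly, ← Polynomial.coe_evalRingHom, RingHom.map_det]
  congr 1
  ext i j
  by_cases h : i = j <;>
    simp [Matrix.charmatrix_apply, Matrix.diagonal_apply, h]

lemma grover_det (m : ℕ) (z : ℂ) (hz1 : z - 1 ≠ 0) (hz2 : z + 1 ≠ 0) :
    (Matrix.diagonal (fun _ => z) - ((groverU (m+2)).map Complex.ofReal)).det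
      = (z+1)^m * (z^2 - (2 - 4/((m:ℂ)+2))*z + 1) := by
  have h2 : ((m:ℂ) + 2) ≠ 0 := by exact_mod_cast Nat.succ_ne_zero (m+1)
  set c : ℂ := 2 / ((m:ℂ) + 2) with hc
  set d : Fin (m+2) → ℂ := fun i => if i = 0 then -1 else 1 with hd
  have hdne : ∀ i, z + d i ≠ 0 := by
    intro i
    by_cases h : i = 0
    · simpa [hd, h, ← sub_eq_add_neg] using hz1
    · simpa [hd, h] using hz2
  have crow : ∀ i j, (Matrix.replicateCol (Fin 1) (fun i => -c / (z + d i)) * Matrix.replicateRow (Fin 1) d) i j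
      = (-c / (z + d i)) * d j := by
    intro i j; simp [Matrix.mul_apply]
  have hfac : (Matrix.diagonal (fun _ => z) - ((groverU (m+2)).map Complex.ofReal))
      = Matrix.diagonal (fun i => z + d i) *
        (1 + Matrix.replicateCol (Fin 1) (fun i => -c / (z + d i)) * Matrix.replicateRow (Fin 1) d) := by
    ext i j
    have hcc : (z + d i) * (-c / (z + d i)) = -c := mul_div_cancel₀ _ (hdne i)
    simp only [Matrix.sub_apply, Matrix.map_apply, groverU, groverRf, Matrix.mul_diagonal,
      groverRD, Matrix.of_apply, Matrix.diagonal_mul, Matrix.add_apply, Matrix.one_apply,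
      crow, Matrix.diagonal_apply, Complex.ofReal_mul, Complex.ofReal_sub, Complex.ofReal_div,
      Complex.ofReal_ofNat, Complex.ofReal_natCast, apply_ite Complex.ofReal,
      Complex.ofReal_one, Complex.ofReal_zero, Complex.ofReal_neg]
    push_cast
    rw [mul_add, ← mul_assoc, hcc]
    by_cases h : i = j
    · subst h
      by_cases h0 : i = 0 <;> simp [h0, hd, hc] <;> ring
    · by_cases h0 : j = 0
      · subst h0
        have hi : ¬ i = 0 := h
        simp [h, hi, hd, hc] <;> ring
      · simp [h, h0, hd, hc] <;> ring
  rw [hfac, Matrix.det_mul, Matrix.det_diagonal]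
  erw [Matrix.det_one_add_replicateCol_mul_replicateRow (ι := Fin 1)]
  have hprod : (∏ i : Fin (m+2), (z + d i)) = (z - 1) * (z + 1)^(m+1) := by
    rw [Fin.prod_univ_succ]
    simp [hd, Fin.succ_ne_zero, sub_eq_add_neg]
  have hdot : (dotProduct d fun i => -c / (z + d i))
      = -c / (z - 1) * (-1) + (m+1 : ℂ) * (-c / (z + 1)) := by
    rw [dotProduct, Fin.sum_univ_succ]
    simp [hd, Fin.succ_ne_zero, sub_eq_add_neg, mul_comm]
  rw [hprod, hdot, hc]
  have h3 : (z + 1)^(m+1) = (z+1)^m * (z+1) := pow_succ _ _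
  rw [h3]
  field_simp
  ring

/-- The spectrum of `U_N` with multiplicity is `{[-1]^{N-2}, [e^{iξ}]^1, [e^{-iξ}]^1}`
where `cos ξ = 1 - 2/N`: the characteristic polynomial over `ℂ` factors accordingly.
In particular every eigenvalue of `U_N` is `-1`, `e^{iξ}`, or `e^{-iξ}`. -/
theorem stmt_6 (N : ℕ) [NeZero N] (hN : 2 ≤ N) (ξ : ℝ) (hξ : ξ ∈ Set.Icc 0 Real.pi)
    (hcos : Real.cos ξ = 1 - 2 / (N : ℝ)) :
    Matrix.charpoly ((groverU N).map (Complex.ofReal)) =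
      (X + 1) ^ (N - 2) * (X - C (Complex.exp (ξ * Complex.I))) *
        (X - C (Complex.exp (-ξ * Complex.I))) ∧
    ∀ μ ∈ spectrum ℂ ((groverU N).map (Complex.ofReal)),
      μ = -1 ∨ μ = Complex.exp (ξ * Complex.I) ∨ μ = Complex.exp (-ξ * Complex.I) := by
  obtain ⟨m, rfl⟩ : ∃ m, N = m + 2 := ⟨N - 2, by omega⟩
  set a : ℂ := Complex.exp (ξ * Complex.I) with ha
  set b : ℂ := Complex.exp (-ξ * Complex.I) with hb
  have hab : a * b = 1 := by
    rw [ha, hb, ← Complex.exp_add]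
    ring_nf
    exact Complex.exp_zero
  have hsum : a + b = 2 - 4 / ((m:ℂ) + 2) := by
    have h1 : a = Complex.cos ξ + Complex.sin ξ * Complex.I := Complex.exp_mul_I ξ
    have h2 : b = Complex.cos ξ - Complex.sin ξ * Complex.I := by
      rw [hb]
      have : ((-ξ : ℝ) : ℂ) * Complex.I = (-↑ξ) * Complex.I := by push_cast; ring
      rw [← this, Complex.exp_mul_I]
      push_cast
      simp [Complex.cos_neg, Complex.sin_neg, sub_eq_add_neg]
    rw [h1, h2, ← Complex.ofReal_cos, hcos]
    push_cast
    ring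
  have hcp : Matrix.charpoly ((groverU (m+2)).map (Complex.ofReal)) =
      (X + 1) ^ (m + 2 - 2) * (X - C a) * (X - C b) := by
    apply Polynomial.eq_of_infinite_eval_eq
    have hfin : ({(1:ℂ), -1} : Set ℂ).Finite := by
      exact (Set.finite_singleton _).insert _
    apply (hfin.infinite_compl).mono
    intro z hz
    simp only [Set.mem_compl_iff, Set.mem_insert_iff, Set.mem_singleton_iff, not_or] at hz
    obtain ⟨hz1, hz2⟩ := hz
    have hz1' : z - 1 ≠ 0 := sub_ne_zero.mpr hz1
    have hz2' : z + 1 ≠ 0 := by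
      intro h; apply hz2; linear_combination h
    simp only [Set.mem_setOf_eq]
    rw [eval_charpoly', grover_det m z hz1' hz2']
    have hm : m + 2 - 2 = m := by omega
    rw [hm]
    simp only [eval_mul, eval_pow, eval_add, eval_sub, eval_X, eval_one, eval_C]
    have : z^2 - (2 - 4/((m:ℂ)+2))*z + 1 = (z - a) * (z - b) := by
      rw [show (z - a) * (z - b) = z^2 - (a + b) * z + a * b by ring, hab, hsum]
    rw [this, mul_assoc]
  refine ⟨hcp, ?_⟩
  intro μ hμ
  have hdet : (Matrix.diagonal (fun _ => μ) - (groverU (m+2)).map Complex.ofReal).det = 0 := by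
    rw [spectrum.mem_iff] at hμ
    by_contra h
    apply hμ
    rw [Matrix.isUnit_iff_isUnit_det]
    have : algebraMap ℂ (Matrix (Fin (m+2)) (Fin (m+2)) ℂ) μ -
        (groverU (m+2)).map Complex.ofReal =
        Matrix.diagonal (fun _ => μ) - (groverU (m+2)).map Complex.ofReal := by
      rw [Matrix.algebraMap_eq_diagonal]
      rfl
    rw [this]
    exact isUnit_iff_ne_zero.mpr h
  have heval : (Matrix.charpoly ((groverU (m+2)).map Complex.ofReal)).eval μ = 0 := by
    rw [eval_charpoly']; exact hdet
  rw [hcp] at heval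
  simp only [eval_mul, eval_pow, eval_add, eval_sub, eval_X, eval_one, eval_C,
    mul_eq_zero, pow_eq_zero_iff'] at heval
  rcases heval with (⟨h1, -⟩ | h1) | h1
  · left; linear_combination h1
  · right; left; linear_combination h1
  · right; right; linear_combination h1
end

section
/- For every integer N ≥ 2 with N ≠ 2 and N ≠ 4, the Grover algorithm matrix U_N has infinite period, i.e., U_N^t ≠ I_N for all t ≥ 1. -/
open Matrix Complex Polynomial

lemma groverU_apply (N : ℕ) [NeZero N] (i j : Fin N) :
    groverU N i j = (2 / (N : ℝ) - if i = j then 1 else 0) * (if j = 0 then -1 else 1) := by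
  simp [groverU, groverRD, groverRf, Matrix.mul_diagonal]

noncomputable def gvec (N : ℕ) [NeZero N] (z : ℂ) : Fin N → ℂ :=
  fun j => (z - 1) + if j = 0 then 2 else 0

lemma grover_eigen (N : ℕ) [NeZero N] (hN : 3 ≤ N) (z : ℂ)
    (hz : (N : ℂ) * z ^ 2 = (2 * N - 4) * z - N) :
    ((groverU N).map Complex.ofReal) *ᵥ gvec N z = z • gvec N z := by
  have hNC : (N : ℂ) ≠ 0 := Nat.cast_ne_zero.mpr (by omega)
  have hNR : (N : ℝ) ≠ 0 := Nat.cast_ne_zero.mpr (by omega)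
  funext i
  simp only [Matrix.mulVec, dotProduct, Matrix.map_apply, gvec, Pi.smul_apply,
    smul_eq_mul]
  by_cases hi : i = 0
  · subst hi
    have key : ∀ j : Fin N, (↑(groverU N 0 j) : ℂ) * ((z - 1) + if j = 0 then 2 else 0)
        = (2 / N) * (z - 1)
          + (if j = 0 then ((2/(N:ℂ) - 1) * (-1) * (z + 1) - (2/N) * (z - 1)) else 0) := by
      intro j
      rw [groverU_apply]
      push_cast
      split_ifs <;> push_cast <;> first | ring1 | (exfalso; subst_vars; simp_all)
    rw [Finset.sum_congr rfl fun j _ => key j, Finset.sum_add_distrib, Finset.sum_const,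
      Finset.sum_ite_eq' Finset.univ (0 : Fin N)]
    simp only [Finset.card_univ, Fintype.card_fin, Finset.mem_univ, if_pos, nsmul_eq_mul,
      if_pos rfl]
    field_simp
    linear_combination -hz
  · have h0i : ¬ (0 : Fin N) = i := fun h => hi h.symm
    have key : ∀ j : Fin N, (↑(groverU N i j) : ℂ) * ((z - 1) + if j = 0 then 2 else 0)
        = (2 / N) * (z - 1)
          + ((if j = 0 then ((2/(N:ℂ)) * (-1) * (z + 1) - (2/N) * (z - 1)) else 0)
            + (if j = i then ((2/(N:ℂ) - 1) * (z - 1) - (2/N) * (z - 1)) else 0)) := by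
      intro j
      rw [groverU_apply]
      push_cast
      split_ifs <;> push_cast <;> first | ring1 | (exfalso; subst_vars; simp_all)
    rw [Finset.sum_congr rfl fun j _ => key j, Finset.sum_add_distrib, Finset.sum_const,
      Finset.sum_add_distrib, Finset.sum_ite_eq' Finset.univ (0 : Fin N),
      Finset.sum_ite_eq' Finset.univ i]
    simp only [Finset.card_univ, Fintype.card_fin, Finset.mem_univ, if_pos, nsmul_eq_mul]
    rw [if_neg hi]
    field_simp
    linear_combination -hz

lemma grover_eigen_pow (N : ℕ) [NeZero N] (hN : 3 ≤ N) (z : ℂ)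
    (hz : (N : ℂ) * z ^ 2 = (2 * N - 4) * z - N) (t : ℕ) :
    (((groverU N).map Complex.ofReal) ^ t) *ᵥ gvec N z = z ^ t • gvec N z := by
  induction t with
  | zero => simp
  | succ t ih =>
    rw [pow_succ', ← Matrix.mulVec_mulVec, ih, Matrix.mulVec_smul, grover_eigen N hN z hz,
      smul_smul, ← pow_succ]

/-- For `N ≥ 2` with `N ≠ 2, 4`, the Grover algorithm matrix has infinite period. -/
theorem stmt_10 (N : ℕ) [NeZero N] (hN : 2 ≤ N) (h2 : N ≠ 2) (h4 : N ≠ 4) :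
    ∀ t : ℕ, 1 ≤ t → groverU N ^ t ≠ 1 := by
  intro t ht hU
  have hN3 : 3 ≤ N := by omega
  have hNR : (N : ℝ) ≠ 0 := Nat.cast_ne_zero.mpr (by omega)
  have hNC : (N : ℂ) ≠ 0 := Nat.cast_ne_zero.mpr (by omega)
  set a : ℝ := 1 - 2 / N with ha
  have h0a : 0 < a := by
    have : (3:ℝ) ≤ N := by exact_mod_cast Nat.cast_le.mpr hN3
    have : 2 / (N:ℝ) < 1 := by rw [div_lt_one (by linarith)]; linarith
    simp [ha]; linarith
  have ha1 : a < 1 := by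
    have : 0 < 2 / (N:ℝ) := by positivity
    simp [ha]; linarith
  set b : ℝ := Real.sqrt (1 - a ^ 2) with hbdef
  have hb : 0 < b := Real.sqrt_pos.mpr (by nlinarith)
  have hb2 : b ^ 2 = 1 - a ^ 2 := Real.sq_sqrt (by nlinarith)
  set z : ℂ := (a : ℂ) + (b : ℂ) * Complex.I with hzdef
  have hb2C : ((b:ℂ)) ^ 2 = 1 - ((a:ℂ)) ^ 2 := by exact_mod_cast congrArg Complex.ofReal hb2
  have hz0 : z ^ 2 = 2 * (a:ℂ) * z - 1 := by
    rw [hzdef]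
    linear_combination ((b:ℂ)) ^ 2 * Complex.I_sq - hb2C
  have hNa : (N:ℂ) * (a:ℂ) = (N:ℂ) - 2 := by
    rw [ha]; push_cast; field_simp
  have hz : (N : ℂ) * z ^ 2 = (2 * N - 4) * z - N := by
    linear_combination (N:ℂ) * hz0 + 2 * z * hNa
  -- the matrix power fixes the eigenvector
  have hmap : ((groverU N).map Complex.ofReal) ^ t = 1 := by
    have h := congrArg (Complex.ofRealHom.mapMatrix) hU
    rw [map_pow, _root_.map_one] at h
    simp only [RingHom.mapMatrix_apply] at h; exact h
  have hev := grover_eigen_pow N hN3 z hz t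
  rw [hmap, Matrix.one_mulVec] at hev
  -- evaluate at index 1
  have hj : (⟨1, by omega⟩ : Fin N) ≠ 0 := by
    intro h; exact absurd (congrArg Fin.val h) (by simp)
  have hev1 := congrFun hev ⟨1, by omega⟩
  simp only [gvec, if_neg hj, add_zero, Pi.smul_apply, smul_eq_mul] at hev1
  have hzne1 : z - 1 ≠ 0 := by
    intro h
    have : z.im = 0 := by rw [sub_eq_zero] at h; rw [h]; simp
    rw [hzdef] at this
    simp at this
    linarith
  have hzt : z ^ t = 1 := by
    have : (z ^ t - 1) * (z - 1) = 0 := by linear_combination -hev1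
    rcases mul_eq_zero.mp this with h | h
    · exact sub_eq_zero.mp h
    · exact absurd h hzne1
  -- z is a root of unity, so z + z⁻¹ is an algebraic integer
  have htne : t ≠ 0 := by omega
  have hzne0 : z ≠ 0 := by
    intro h; rw [h, zero_pow htne] at hzt; exact zero_ne_one hzt
  have hint : IsIntegral ℤ z := by
    refine ⟨Polynomial.X ^ t - Polynomial.C 1, Polynomial.monic_X_pow_sub_C 1 htne, ?_⟩
    simp [Polynomial.eval₂_sub, hzt]
  have hinvpow : z⁻¹ = z ^ (t - 1) := by
    have h1 : z ^ (t - 1) * z = 1 := by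
      rw [← pow_succ]
      simpa [Nat.sub_add_cancel ht] using hzt
    exact inv_eq_of_mul_eq_one_left h1
  have hs : IsIntegral ℤ (z + z⁻¹) := hint.add (hinvpow ▸ hint.pow (t - 1))
  -- compute z + z⁻¹ = 2 - 4/N
  have hnormSq : Complex.normSq z = 1 := by
    rw [hzdef]; simp [Complex.normSq_apply]; nlinarith
  have hinvconj : z⁻¹ = starRingEnd ℂ z := by
    refine inv_eq_of_mul_eq_one_right ?_
    rw [Complex.mul_conj, hnormSq]; simp
  have hsum : z + z⁻¹ = 2 - 4 / (N : ℂ) := by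
    rw [hinvconj, Complex.add_conj, hzdef]
    push_cast [ha]
    simp
    ring
  -- transfer to ℚ
  set q : ℚ := 2 - 4 / N with hqdef
  have hqC : algebraMap ℚ ℂ q = z + z⁻¹ := by
    rw [eq_ratCast, hsum, hqdef]
    push_cast
    ring
  have hq : IsIntegral ℤ q := by
    rw [← isIntegral_algebraMap_iff (R := ℤ) (A := ℚ) (B := ℂ)
      (algebraMap ℚ ℂ).injective, hqC]
    exact hs
  obtain ⟨m, hm⟩ := IsIntegrallyClosed.isIntegral_iff.mp hq
  have hNQ : ((N:ℚ)) ≠ 0 := Nat.cast_ne_zero.mpr (by omega)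
  have hmq : (m : ℚ) = 2 - 4 / N := by
    rw [← hqdef, ← hm]; simp [algebraMap]
  have h4Q : (4 : ℚ) = ((2 - m : ℤ) : ℚ) * N := by
    push_cast
    field_simp at hmq
    linarith
  have h4Z : (4 : ℤ) = (2 - m) * N := by exact_mod_cast h4Q
  have hdvd : N ∣ 4 := by
    have : (N : ℤ) ∣ (4 : ℤ) := Dvd.intro_left _ h4Z.symm
    exact_mod_cast this
  have := Nat.le_of_dvd (by norm_num) hdvd
  interval_cases N
  · exact absurd hdvd (by norm_num)
  · exact h4 rfl
end

section
/- The quadratic x² - 2(1 - 2/N)x + 1 with N ∈ ℤ, N ≥ 2, has all roots equal to roots of unity if and only if N ∈ {2, 4}; for N = 2 it equals Φ₄(x) = x² + 1 and for N = 4 it equals Φ₆(x) = x² - x + 1. -/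
open Polynomial

lemma cyc4' : Polynomial.cyclotomic 4 ℚ = X^2 + 1 := by
  have h := prod_cyclotomic_eq_X_pow_sub_one (by norm_num : 0 < 4) ℚ
  have hd : (Nat.divisors 4) = {1,2,4} := by decide
  rw [hd] at h
  simp [Finset.prod_insert, cyclotomic_one, cyclotomic_two] at h
  have hne : ((X - 1) * (X+1) : ℚ[X]) ≠ 0 := by
    intro hc
    have := congrArg (Polynomial.eval 2) hc
    norm_num at this
  have h2 : ((X - 1) * (X+1) : ℚ[X]) * cyclotomic 4 ℚ
       = ((X - 1) * (X+1) : ℚ[X]) * (X^2 + 1) := by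
    rw [mul_assoc, h]; ring
  exact mul_left_cancel₀ hne h2

lemma cyc6' : Polynomial.cyclotomic 6 ℚ = X^2 - X + 1 := by
  have h := prod_cyclotomic_eq_X_pow_sub_one (by norm_num : 0 < 6) ℚ
  have hd : (Nat.divisors 6) = {1,2,3,6} := by decide
  rw [hd] at h
  simp [Finset.prod_insert, cyclotomic_one, cyclotomic_two, cyclotomic_three] at h
  have hne : ((X - 1) * ((X+1) * (X^2+X+1)) : ℚ[X]) ≠ 0 := by
    intro hc
    have := congrArg (Polynomial.eval 2) hc
    norm_num at this
  have h2 : ((X - 1) * ((X+1) * (X^2+X+1)) : ℚ[X]) * cyclotomic 6 ℚ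
       = ((X - 1) * ((X+1) * (X^2+X+1)) : ℚ[X]) * (X^2 - X + 1) := by
    rw [cyclotomic_six]
  exact mul_left_cancel₀ hne h2

/-- A root of unity is integral over ℤ. -/
lemma rootOfUnity_isIntegral {z : ℂ} {n : ℕ} (hn : 0 < n) (hz : z ^ n = 1) :
    IsIntegral ℤ z := by
  refine ⟨X ^ n - 1, monic_X_pow_sub_C 1 hn.ne', ?_⟩
  simp [eval₂_sub, eval₂_X_pow, hz]

/-- The quadratic `x² - 2(1 - 2/N)x + 1` (`N ∈ ℤ`, `N ≥ 2`) has all roots equal to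
roots of unity iff `N ∈ {2, 4}`; for `N = 2` it is `Φ₄(x) = x² + 1` and for
`N = 4` it is `Φ₆(x) = x² - x + 1`. -/
theorem stmt_14 (N : ℤ) (hN : 2 ≤ N) :
    ((∀ z : ℂ, z ^ 2 - 2 * (1 - 2 / (N : ℂ)) * z + 1 = 0 →
        ∃ n : ℕ, 0 < n ∧ z ^ n = 1) ↔ (N = 2 ∨ N = 4)) ∧
    (N = 2 → (Polynomial.X ^ 2 - Polynomial.C (2 * (1 - 2 / (N : ℚ))) * Polynomial.X + 1)
        = Polynomial.cyclotomic 4 ℚ) ∧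
    (N = 4 → (Polynomial.X ^ 2 - Polynomial.C (2 * (1 - 2 / (N : ℚ))) * Polynomial.X + 1)
        = Polynomial.cyclotomic 6 ℚ) := by
  have hN0 : (N : ℂ) ≠ 0 := by
    exact_mod_cast (by omega : N ≠ 0)
  have hNQ0 : (N : ℚ) ≠ 0 := by
    exact_mod_cast (by omega : N ≠ 0)
  have hNR2 : (2 : ℝ) ≤ (N : ℝ) := by exact_mod_cast hN
  refine ⟨⟨?_, ?_⟩, ?_, ?_⟩
  · -- forward direction
    intro h
    set cr : ℝ := 1 - 2 / (N : ℝ) with hcr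
    have hcr0 : 0 ≤ cr := by
      have : 2 / (N : ℝ) ≤ 1 := by
        rw [div_le_one (by linarith)]; linarith
      simp [hcr]; linarith
    have hcr1 : cr ≤ 1 := by
      have : 0 < 2 / (N : ℝ) := by positivity
      simp [hcr]; linarith
    set s : ℝ := Real.sqrt (1 - cr ^ 2) with hs
    have hs2 : s ^ 2 = 1 - cr ^ 2 := by
      rw [hs]; exact Real.sq_sqrt (by nlinarith)
    have hs2c : (s : ℂ) ^ 2 = 1 - (cr : ℂ) ^ 2 := by exact_mod_cast hs2
    set z : ℂ := (cr : ℂ) + (s : ℂ) * Complex.I with hz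
    have hcc : 2 * (1 - 2 / (N : ℂ)) = 2 * (cr : ℂ) := by
      rw [hcr]; push_cast; ring
    have hroot : z ^ 2 - 2 * (1 - 2 / (N : ℂ)) * z + 1 = 0 := by
      rw [hcc, hz]
      linear_combination (-1 : ℂ) * hs2c + (s : ℂ) ^ 2 * Complex.I_sq
    obtain ⟨n, hn, hzn⟩ := h z hroot
    have hz0 : z ≠ 0 := by
      intro h0
      rw [h0] at hzn
      simp [zero_pow hn.ne'] at hzn
    have hzi : IsIntegral ℤ z := rootOfUnity_isIntegral hn hzn
    have hzinv : z ^ (n - 1) = z⁻¹ := by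
      field_simp
      rw [← pow_succ, Nat.sub_add_cancel hn]
      exact hzn
    -- t = z + z⁻¹ is integral
    have hti : IsIntegral ℤ (z + z ^ (n - 1)) := hzi.add (hzi.pow _)
    have htval : z + z ^ (n - 1) = 2 * (1 - 2 / (N : ℂ)) := by
      rw [hzinv]
      have : z * (z + z⁻¹) = z * (2 * (1 - 2 / (N : ℂ))) := by
        rw [mul_add, mul_inv_cancel₀ hz0]
        linear_combination hroot
      exact mul_left_cancel₀ hz0 this
    rw [htval] at hti
    -- descend to ℚ
    set r : ℚ := 2 * (1 - 2 / (N : ℚ)) with hr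
    have hrc : ((r : ℚ) : ℂ) = 2 * (1 - 2 / (N : ℂ)) := by
      rw [hr]; push_cast; ring
    have hri : IsIntegral ℤ r := by
      rw [show ((r : ℚ) : ℂ) = algebraMap ℚ ℂ r from rfl] at hrc
      have := (isIntegral_algebraMap_iff
        (algebraMap ℚ ℂ).injective (R := ℤ) (x := r)).mp (hrc ▸ hti)
      exact this
    obtain ⟨m, hm⟩ := IsIntegrallyClosed.isIntegral_iff.mp hri
    have hm' : (m : ℚ) = 2 * (1 - 2 / (N : ℚ)) := hm
    have hdvd : N ∣ 4 := by
      have : (m : ℚ) * (N : ℚ) = 2 * (N : ℚ) - 4 := by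
        field_simp at hm' ⊢
        linarith [hm']
      have hint : m * N = 2 * N - 4 := by exact_mod_cast this
      exact ⟨2 - m, by linarith⟩
    have hle : N ≤ 4 := Int.le_of_dvd (by norm_num) hdvd
    interval_cases N
    · left; rfl
    · omega
    · right; rfl
  · -- reverse direction
    rintro (rfl | rfl) z hzroot
    · refine ⟨4, by norm_num, ?_⟩
      have : z ^ 2 = -1 := by
        push_cast at hzroot
        linear_combination hzroot
      calc z ^ 4 = (z ^ 2) ^ 2 := by ring
        _ = 1 := by rw [this]; norm_num
    · refine ⟨6, by norm_num, ?_⟩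
      have h2 : z ^ 2 = z - 1 := by
        push_cast at hzroot
        linear_combination hzroot
      have h3 : z ^ 3 = -1 := by
        calc z ^ 3 = z * z ^ 2 := by ring
          _ = z * (z - 1) := by rw [h2]
          _ = z ^ 2 - z := by ring
          _ = (z - 1) - z := by rw [h2]
          _ = -1 := by ring
      calc z ^ 6 = (z ^ 3) ^ 2 := by ring
        _ = 1 := by rw [h3]; norm_num
  · rintro rfl
    rw [cyc4']
    norm_num
  · rintro rfl
    rw [cyc6']
    norm_num
end

section
/- The matrix zeta function of the Grover algorithm matrix satisfies the absolute automorphy relation ζ_{U_N}(1/u) = (-1)^N det(U_N) · u^N · ζ_{U_N}(u), and (-1)^N det(U_N) ∈ {-1, 1}; hence ζ_{U_N} is an absolute automorphic form of weight -N. -/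
open Matrix


/-- The matrix zeta function `ζ_{U_N}(u) = det(I_N - u U_N)⁻¹`. -/
noncomputable def groverZeta (N : ℕ) [NeZero N] (u : ℝ) : ℝ :=
  (Matrix.det (1 - u • groverU N))⁻¹

lemma groverRD_sq (N : ℕ) [NeZero N] : groverRD N * groverRD N = 1 := by
  have hN : (N : ℝ) ≠ 0 := Nat.cast_ne_zero.mpr (NeZero.ne N)
  ext i j
  simp only [groverRD, Matrix.mul_apply, Matrix.of_apply, Matrix.one_apply]
  have : ∀ k : Fin N, (2 / (N : ℝ) - if i = k then 1 else 0) *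
      (2 / (N : ℝ) - if k = j then 1 else 0) =
      4 / (N : ℝ) ^ 2 - (2 / N) * (if i = k then 1 else 0)
        - (2 / N) * (if k = j then 1 else 0)
        + (if i = k then 1 else 0) * (if k = j then 1 else 0) := by
    intro k; ring
  rw [Finset.sum_congr rfl fun k _ => this k]
  simp only [Finset.sum_add_distrib, Finset.sum_sub_distrib, Finset.sum_const,
    Finset.card_univ, Fintype.card_fin, ← Finset.mul_sum]
  rw [Finset.sum_ite_eq Finset.univ i (fun _ => (1:ℝ)),
    Finset.sum_ite_eq' Finset.univ j (fun _ => (1:ℝ))]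
  have h1 : ∑ k : Fin N, (if i = k then (1:ℝ) else 0) * (if k = j then 1 else 0)
      = if i = j then 1 else 0 := by
    rw [Finset.sum_eq_single i]
    · simp
    · intro b _ hb; simp [Ne.symm hb]
    · simp
  rw [h1]
  simp only [Finset.mem_univ, if_true]
  have hNs : (N • (4 / (N:ℝ)^2) : ℝ) = 4 / N := by
    rw [nsmul_eq_mul]
    field_simp
  rw [hNs]
  ring

lemma groverRf_sq (N : ℕ) [NeZero N] : groverRf N * groverRf N = 1 := by
  ext i j
  simp only [groverRf, Matrix.diagonal_mul_diagonal, Matrix.diagonal_apply,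
    Matrix.one_apply]
  by_cases h : i = j <;> [skip; simp [h]]
  subst h
  by_cases h0 : i = 0 <;> simp [h0]

lemma groverRD_symm (N : ℕ) : (groverRD N)ᵀ = groverRD N := by
  ext i j
  simp only [groverRD, Matrix.transpose_apply, Matrix.of_apply]
  by_cases h : i = j <;> simp [h, eq_comm]

lemma groverRf_symm (N : ℕ) [NeZero N] : (groverRf N)ᵀ = groverRf N :=
  Matrix.diagonal_transpose _

lemma groverU_mul_transpose (N : ℕ) [NeZero N] :
    groverU N * (groverU N)ᵀ = 1 := by
  rw [groverU, Matrix.transpose_mul, groverRD_symm, groverRf_symm]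
  calc groverRD N * groverRf N * (groverRf N * groverRD N)
      = groverRD N * (groverRf N * groverRf N) * groverRD N := by
        noncomm_ring
    _ = 1 := by rw [groverRf_sq, mul_one, groverRD_sq]

lemma groverU_det_sq (N : ℕ) [NeZero N] :
    Matrix.det (groverU N) * Matrix.det (groverU N) = 1 := by
  have := congrArg Matrix.det (groverU_mul_transpose N)
  rwa [Matrix.det_mul, Matrix.det_transpose, Matrix.det_one] at this

/-- Absolute automorphy: `ζ_{U_N}(1/u) = (-1)^N det(U_N) u^N ζ_{U_N}(u)` (for
`u ≠ 0` with `det(I - u U_N) ≠ 0`) and `(-1)^N det(U_N) ∈ {-1, 1}`, so `ζ_{U_N}`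
is an absolute automorphic form of weight `-N`. -/
theorem stmt_16 (N : ℕ) [NeZero N] (hN : 2 ≤ N) :
    (∀ u : ℝ, u ≠ 0 → Matrix.det (1 - u • groverU N) ≠ 0 →
      groverZeta N u⁻¹ =
        (-1) ^ N * Matrix.det (groverU N) * u ^ N * groverZeta N u) ∧
    ((-1) ^ N * Matrix.det (groverU N) = 1 ∨
      (-1) ^ N * Matrix.det (groverU N) = -1) := by
  set U := groverU N with hU
  have hdet2 := groverU_det_sq N
  constructor
  · intro u hu hdu
    have key : Matrix.det (1 - u⁻¹ • U) =
        u⁻¹ ^ N * (Matrix.det U * ((-1) ^ N * Matrix.det (1 - u • U))) := by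
      have h1 : (1 : Matrix (Fin N) (Fin N) ℝ) - u⁻¹ • U
          = u⁻¹ • (u • 1 - U) := by
        rw [smul_sub, smul_smul, inv_mul_cancel₀ hu, one_smul]
      have h2 : u • (1 : Matrix (Fin N) (Fin N) ℝ) - U
          = U * (u • Uᵀ - 1) := by
        rw [Matrix.mul_sub, mul_one, Matrix.mul_smul, groverU_mul_transpose]
      have h3 : u • Uᵀ - (1 : Matrix (Fin N) (Fin N) ℝ)
          = -(1 - u • Uᵀ) := by rw [neg_sub]
      have h4 : ((1 : Matrix (Fin N) (Fin N) ℝ) - u • U)ᵀ = 1 - u • Uᵀ := by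
        rw [Matrix.transpose_sub, Matrix.transpose_one, Matrix.transpose_smul]
      rw [h1, Matrix.det_smul, h2, Matrix.det_mul, h3, Matrix.det_neg, ← h4,
        Matrix.det_transpose]
      simp [Fintype.card_fin]
    rw [groverZeta, groverZeta, key]
    have hdU : Matrix.det U ≠ 0 := fun h => by
      have h' : Matrix.det U * Matrix.det U = 1 := hdet2
      rw [h, zero_mul] at h'; exact zero_ne_one h'
    have hdUinv : (Matrix.det U)⁻¹ = Matrix.det U := by
      field_simp
      linarith [hdet2]
    have hneg : (((-1 : ℝ)) ^ N)⁻¹ = (-1 : ℝ) ^ N := by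
      rcases Nat.even_or_odd N with h | h
      · rw [h.neg_one_pow]; norm_num
      · rw [h.neg_one_pow]; norm_num
    rw [mul_inv, mul_inv, mul_inv, inv_pow, inv_inv, hdUinv, hneg]
    ring
  · rcases mul_self_eq_one_iff.mp hdet2 with h | h
    · rcases Nat.even_or_odd N with hp | hp
      · left; rw [hp.neg_one_pow, h]; ring
      · right; rw [hp.neg_one_pow, h]; ring
    · rcases Nat.even_or_odd N with hp | hp
      · right; rw [hp.neg_one_pow, h]; ring
      · left; rw [hp.neg_one_pow, h]; ring
end
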